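/- (Toeplitz–Hausdorff) For any complex n×n matrix A, the field of values F(A) = {x*Ax : ‖x‖ = 1} is a convex subset of ℂ. -/

import Mathlib

open Matrix

private lemma fov_norm_sq {n : ℕ} (v : EuclideanSpace ℂ (Fin n)) :
    star (v : Fin n → ℂ) ⬝ᵥ (v : Fin n → ℂ) = (‖v‖ : ℂ)^2 :=
  (dotProduct_comm _ _).trans
    ((EuclideanSpace.inner_eq_star_dotProduct v v).symm.trans (inner_self_eq_norm_sq_to_K v))

private lemma fov_expand {n : ℕ} (B : Matrix (Fin n) (Fin n) ℂ) (x y : Fin n → ℂ) (a b : ℂ) :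
    star (a • x + b • y) ⬝ᵥ B.mulVec (a • x + b • y)
      = star a * a * (star x ⬝ᵥ B.mulVec x) + star a * b * (star x ⬝ᵥ B.mulVec y)
        + star b * a * (star y ⬝ᵥ B.mulVec x) + star b * b * (star y ⬝ᵥ B.mulVec y) := by
  simp [star_add, star_smul, mulVec_add, mulVec_smul, add_dotProduct, dotProduct_add,
    smul_dotProduct, dotProduct_smul, smul_eq_mul]
  ring

private lemma fov_seg {n : ℕ} (B : Matrix (Fin n) (Fin n) ℂ)
    (x y : EuclideanSpace ℂ (Fin n)) (hx : ‖x‖ = 1) (hy : ‖y‖ = 1)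
    (hxB : star (x : Fin n → ℂ) ⬝ᵥ B.mulVec (x : Fin n → ℂ) = 1)
    (hyB : star (y : Fin n → ℂ) ⬝ᵥ B.mulVec (y : Fin n → ℂ) = 0)
    (t : ℝ) (ht : t ∈ Set.Icc (0:ℝ) 1) :
    ∃ v : EuclideanSpace ℂ (Fin n), ‖v‖ = 1 ∧
      star (v : Fin n → ℂ) ⬝ᵥ B.mulVec (v : Fin n → ℂ) = (t : ℂ) := by
  set a : ℂ := star (x : Fin n → ℂ) ⬝ᵥ B.mulVec (y : Fin n → ℂ) with ha
  set b : ℂ := star (y : Fin n → ℂ) ⬝ᵥ B.mulVec (x : Fin n → ℂ) with hb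
  -- choose a phase u making u*a + conj u * b real
  obtain ⟨u, hu, him⟩ : ∃ u : ℂ, ‖u‖ = 1 ∧ (u * a + star u * b).im = 0 := by
    by_cases hc : a - star b = 0
    · refine ⟨1, by simp, ?_⟩
      have hab : a = star b := by linear_combination hc
      simp [hab, Complex.star_def, Complex.add_im, Complex.conj_im]
    · set c : ℂ := a - star b with hcdef
      refine ⟨star c / ((‖c‖ : ℝ) : ℂ), ?_, ?_⟩
      · rw [norm_div, norm_star]
        simp [Complex.norm_real, abs_of_nonneg (norm_nonneg c),
          div_self (norm_ne_zero_iff.mpr hc)]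
      · have hstar : star (star c / ((‖c‖ : ℝ) : ℂ)) = c / ((‖c‖ : ℝ) : ℂ) := by
          simp [star_div₀, star_star, Complex.star_def, Complex.conj_ofReal]
        rw [hstar]
        have key : star c * a + c * b = ((Complex.normSq a - Complex.normSq b : ℝ) : ℂ) := by
          simp only [hcdef, Complex.star_def, map_sub, Complex.conj_conj]
          push_cast
          linear_combination Complex.mul_conj a - Complex.mul_conj b
        have : star c / ((‖c‖ : ℝ) : ℂ) * a + c / ((‖c‖ : ℝ) : ℂ) * b
            = (((Complex.normSq a - Complex.normSq b) / ‖c‖ : ℝ) : ℂ) := by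
          push_cast
          rw [div_mul_eq_mul_div, div_mul_eq_mul_div, ← add_div, key]
          push_cast; ring
        rw [this, Complex.ofReal_im]
  set y' : EuclideanSpace ℂ (Fin n) := u • y with hy'def
  have hy' : ‖y'‖ = 1 := by rw [hy'def, norm_smul, hu, hy, one_mul]
  have hy'B : star (y' : Fin n → ℂ) ⬝ᵥ B.mulVec (y' : Fin n → ℂ) = 0 := by
    have hco : (y' : Fin n → ℂ) = u • (y : Fin n → ℂ) := rfl
    rw [hco, star_smul, mulVec_smul, smul_dotProduct, dotProduct_smul, smul_eq_mul,
      smul_eq_mul, hyB, mul_zero, mul_zero]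
  set A2 : ℂ := star (x : Fin n → ℂ) ⬝ᵥ B.mulVec (y' : Fin n → ℂ) with hA2
  set B2 : ℂ := star (y' : Fin n → ℂ) ⬝ᵥ B.mulVec (x : Fin n → ℂ) with hB2
  have hA2' : A2 = u * a := by
    have hco : (y' : Fin n → ℂ) = u • (y : Fin n → ℂ) := rfl
    rw [hA2, hco, mulVec_smul, dotProduct_smul, smul_eq_mul, ha]
  have hB2' : B2 = star u * b := by
    have hco : (y' : Fin n → ℂ) = u • (y : Fin n → ℂ) := rfl
    rw [hB2, hco, star_smul, smul_dotProduct, smul_eq_mul, hb]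
  set r : ℝ := (u * a + star u * b).re with hrdef
  have hsum : A2 + B2 = (r : ℂ) := by
    rw [hA2', hB2']
    exact Complex.ext rfl (by rw [Complex.ofReal_im, him])
  -- the path
  set w : ℝ → EuclideanSpace ℂ (Fin n) :=
    fun s => ((s : ℂ)) • x + (((1 - s : ℝ) : ℂ)) • y' with hwdef
  have hwco : ∀ s : ℝ, (w s : Fin n → ℂ)
      = ((s : ℂ)) • (x : Fin n → ℂ) + (((1 - s : ℝ) : ℂ)) • (y' : Fin n → ℂ) := fun s => rfl
  have hf : ∀ s : ℝ, star (w s : Fin n → ℂ) ⬝ᵥ B.mulVec (w s : Fin n → ℂ)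
      = ((s^2 + s * (1 - s) * r : ℝ) : ℂ) := by
    intro s
    rw [hwco s, fov_expand, hxB, hy'B, ← hA2, ← hB2]
    have hss : star ((s : ℝ) : ℂ) = ((s : ℝ) : ℂ) := by
      simp [Complex.star_def, Complex.conj_ofReal]
    have hss' : star ((1 - s : ℝ) : ℂ) = ((1 - s : ℝ) : ℂ) := by
      simp [Complex.star_def, Complex.conj_ofReal]
    rw [hss, hss']
    have : ((s:ℝ):ℂ) * ((s:ℝ):ℂ) * 1 + ((s:ℝ):ℂ) * ((1-s:ℝ):ℂ) * A2
        + ((1-s:ℝ):ℂ) * ((s:ℝ):ℂ) * B2 + ((1-s:ℝ):ℂ) * ((1-s:ℝ):ℂ) * 0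
        = ((s:ℝ):ℂ)^2 + ((s:ℝ):ℂ) * ((1-s:ℝ):ℂ) * (A2 + B2) := by ring
    rw [this, hsum]
    push_cast; ring
  have hwne : ∀ s ∈ Set.Icc (0:ℝ) 1, w s ≠ 0 := by
    intro s hs h0
    have h1 : ((s : ℂ)) • x + (((1 - s : ℝ) : ℂ)) • y' = 0 := h0
    have h2 : ((s : ℂ)) • x = -((((1 - s : ℝ) : ℂ)) • y') := by
      rw [eq_neg_iff_add_eq_zero]; exact h1
    have h3 : ‖((s : ℂ)) • x‖ = ‖(((1 - s : ℝ) : ℂ)) • y'‖ := by rw [h2, norm_neg]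
    rw [norm_smul, norm_smul, hx, hy', mul_one, mul_one] at h3
    have h4 : |s| = |1 - s| := by
      rw [Complex.norm_real, Complex.norm_real, Real.norm_eq_abs, Real.norm_eq_abs] at h3
      exact h3
    have hs0 := hs.1
    have hs1 := hs.2
    rw [abs_of_nonneg hs0, abs_of_nonneg (by linarith)] at h4
    have hshalf : s = 1/2 := by linarith
    subst hshalf
    have h5 : x = -y' := by
      have h6 : ((1/2 : ℝ) : ℂ) • (x + y') = 0 := by
        rw [smul_add]
        convert h1 using 2 <;> norm_num
      rcases smul_eq_zero.mp h6 with h7 | h7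
      · exact absurd h7 (by norm_num)
      · exact eq_neg_iff_add_eq_zero.mpr h7
    have hco : (x : Fin n → ℂ) = -(y' : Fin n → ℂ) := by
      rw [h5]; rfl
    rw [hco, star_neg, mulVec_neg, neg_dotProduct, dotProduct_neg, neg_neg, hy'B] at hxB
    exact zero_ne_one hxB
  -- continuity and IVT
  have hwc : Continuous w := by
    apply Continuous.add
    · exact (Complex.continuous_ofReal).smul continuous_const
    · exact (Complex.continuous_ofReal.comp (continuous_const.sub continuous_id)).smul
        continuous_const
  set N : ℝ → ℝ := fun s => ‖w s‖ with hNdef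
  have hNc : Continuous N := hwc.norm
  have hNne : ∀ s ∈ Set.Icc (0:ℝ) 1, N s ≠ 0 := by
    intro s hs
    simpa [hNdef] using norm_ne_zero_iff.mpr (hwne s hs)
  set g : ℝ → ℝ := fun s => (s^2 + s * (1 - s) * r) / (N s)^2 with hgdef
  have hgc : ContinuousOn g (Set.Icc 0 1) := by
    apply ContinuousOn.div
    · fun_prop
    · exact (hNc.pow 2).continuousOn
    · intro s hs
      exact pow_ne_zero 2 (hNne s hs)
  have hw0 : w 0 = y' := by
    simp [hwdef]
  have hw1 : w 1 = x := by
    simp [hwdef]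
  have hg0 : g 0 = 0 := by simp [hgdef]
  have hg1 : g 1 = 1 := by
    have hN1 : N 1 = 1 := by rw [hNdef]; simp only [hw1]; exact hx
    simp [hgdef, hN1]
  have hivt := intermediate_value_Icc (by norm_num : (0:ℝ) ≤ 1) hgc
  rw [hg0, hg1] at hivt
  obtain ⟨s, hsmem, hst⟩ := hivt ht
  -- normalize w s
  have hNpos : 0 < N s := by
    rcases lt_or_eq_of_le (norm_nonneg (w s)) with h | h
    · exact h
    · exact absurd h.symm (hNne s hsmem)
  refine ⟨(((N s)⁻¹ : ℝ) : ℂ) • w s, ?_, ?_⟩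
  · rw [norm_smul, Complex.norm_real, Real.norm_eq_abs, abs_of_pos (inv_pos.mpr hNpos)]
    exact inv_mul_cancel₀ (hNne s hsmem)
  · have hco : WithLp.ofLp ((((N s)⁻¹ : ℝ) : ℂ) • w s)
        = (((N s)⁻¹ : ℝ) : ℂ) • (w s : Fin n → ℂ) := rfl
    rw [hco, star_smul, mulVec_smul, smul_dotProduct, dotProduct_smul, smul_eq_mul,
      smul_eq_mul, hf s]
    have hstar : star ((((N s)⁻¹ : ℝ)) : ℂ) = (((N s)⁻¹ : ℝ) : ℂ) := by
      simp [Complex.star_def, Complex.conj_ofReal]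
    rw [hstar]
    have hgs : g s = (s^2 + s * (1 - s) * r) / (N s)^2 := rfl
    have hNs : ((N s : ℝ) : ℂ) ≠ 0 := Complex.ofReal_ne_zero.mpr (hNne s hsmem)
    rw [← hst, hgs]
    have h9 : ((s ^ 2 + s * (1 - s) * r) / N s ^ 2 : ℝ)
        = (N s)⁻¹ * ((N s)⁻¹ * (s ^ 2 + s * (1 - s) * r)) := by
      ring
    rw [h9]
    push_cast
    ring
  done

private lemma fov_shift {n : ℕ} (A : Matrix (Fin n) (Fin n) ℂ) (c d : ℂ)
    (v : EuclideanSpace ℂ (Fin n)) (hv : ‖v‖ = 1) :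
    star (v : Fin n → ℂ) ⬝ᵥ ((c • (A - d • 1)).mulVec (v : Fin n → ℂ))
      = c * (star (v : Fin n → ℂ) ⬝ᵥ A.mulVec (v : Fin n → ℂ) - d) := by
  have h : star (v : Fin n → ℂ) ⬝ᵥ (v : Fin n → ℂ) = 1 := by
    rw [fov_norm_sq, hv]; norm_num
  rw [smul_mulVec, sub_mulVec, smul_mulVec, one_mulVec]
  rw [dotProduct_smul, smul_eq_mul, dotProduct_sub, dotProduct_smul, smul_eq_mul, h]
  ring

theorem fov_convex (n : ℕ) (A : Matrix (Fin n) (Fin n) ℂ) :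
    Convex ℝ {z : ℂ | ∃ x : EuclideanSpace ℂ (Fin n), ‖x‖ = 1 ∧
      star (x : Fin n → ℂ) ⬝ᵥ A.mulVec (x : Fin n → ℂ) = z} := by
  rintro z1 ⟨x, hx, hxA⟩ z2 ⟨y, hy, hyA⟩ α β hα hβ hαβ
  by_cases hz : z1 = z2
  · refine ⟨x, hx, ?_⟩
    rw [hxA, hz]
    have : α • z2 + β • z2 = (α + β) • z2 := (add_smul α β z2).symm
    rw [this, hαβ, one_smul]
  · have hzne : z1 - z2 ≠ 0 := sub_ne_zero.mpr hz
    set B : Matrix (Fin n) (Fin n) ℂ := (z1 - z2)⁻¹ • (A - z2 • 1) with hBdef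
    have hxB : star (x : Fin n → ℂ) ⬝ᵥ B.mulVec (x : Fin n → ℂ) = 1 := by
      rw [hBdef, fov_shift A _ _ x hx, hxA]
      field_simp
    have hyB : star (y : Fin n → ℂ) ⬝ᵥ B.mulVec (y : Fin n → ℂ) = 0 := by
      rw [hBdef, fov_shift A _ _ y hy, hyA]
      simp
    have hα1 : α ∈ Set.Icc (0:ℝ) 1 := ⟨hα, by linarith⟩
    obtain ⟨v, hv, hvB⟩ := fov_seg B x y hx hy hxB hyB α hα1
    refine ⟨v, hv, ?_⟩
    rw [hBdef, fov_shift A _ _ v hv] at hvB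
    have hβ' : β = 1 - α := by linarith
    have hval : star (v : Fin n → ℂ) ⬝ᵥ A.mulVec (v : Fin n → ℂ)
        = (α : ℂ) * (z1 - z2) + z2 := by
      field_simp at hvB
      linear_combination hvB
    rw [hval, hβ', Complex.real_smul, Complex.real_smul]
    push_cast
    ring
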